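/- arXiv:2309.11232 — 2 statements merged into one kernel-verified Lean document; each statement's English description precedes it below -/
import Mathlib

section
/- Let D ⊂ ℝ² be measurable with |D| = 1, D ⊂ {x : 0 ≤ x₁ ≤ L, x₂ > 0} for some L > 0, and set A = ∫_D x₂ dx. Then the measure of the set {x ∈ D : 1/(32A) ≤ x₁ ≤ L − 1/(32A), 1/(4L) ≤ x₂ ≤ 4A} is at least 1/4. -/
open MeasureTheory Real
noncomputable section

abbrev E2 := EuclideanSpace ℝ (Fin 2)
def e1 : E2 := EuclideanSpace.single 0 1
def e2 : E2 := EuclideanSpace.single 1 1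
def vec (a b : ℝ) : E2 := a • e1 + b • e2
def d1 (f : E2 → ℝ) (x : E2) : ℝ := fderiv ℝ f x e1
def d2 (f : E2 → ℝ) (x : E2) : ℝ := fderiv ℝ f x e2
def grad (f : E2 → ℝ) (x : E2) : E2 := vec (d1 f x) (d2 f x)
def lap (f : E2 → ℝ) (x : E2) : ℝ := d1 (d1 f) x + d2 (d2 f) x

lemma volume_box (a b c d : ℝ) :
    volume {x : E2 | (a ≤ x 0 ∧ x 0 ≤ b) ∧ (c ≤ x 1 ∧ x 1 ≤ d)} =
      ENNReal.ofReal (b - a) * ENNReal.ofReal (d - c) := by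
  have heq : {x : E2 | (a ≤ x 0 ∧ x 0 ≤ b) ∧ (c ≤ x 1 ∧ x 1 ≤ d)} =
      ((MeasurableEquiv.toLp 2 (Fin 2 → ℝ)).symm) ⁻¹' (Set.univ.pi ![Set.Icc a b, Set.Icc c d]) := by
    ext x
    simp [Set.mem_pi, Fin.forall_fin_two, Set.mem_Icc]
  have hm : MeasurableSet (Set.univ.pi ![Set.Icc a b, Set.Icc c d]) :=
    MeasurableSet.univ_pi fun i => by fin_cases i <;> exact measurableSet_Icc
  rw [heq, (EuclideanSpace.volume_preserving_symm_measurableEquiv_toLp (Fin 2)).measure_preimage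
    hm.nullMeasurableSet, volume_pi_pi]
  simp [Fin.prod_univ_two]

/-- under the same assumptions, the part of `D` in the box
`1/(32A) ≤ x₁ ≤ L - 1/(32A)`, `1/(4L) ≤ x₂ ≤ 4A` has measure at least `1/4`. -/
theorem stmt2 (D : Set E2) (hD : MeasurableSet D) (hvol : volume D = 1)
    (L : ℝ) (hL : 0 < L)
    (hsub : ∀ x ∈ D, (0 ≤ x 0 ∧ x 0 ≤ L) ∧ 0 < x 1)
    (hint : IntegrableOn (fun x : E2 => x 1) D volume)
    (A : ℝ) (hA : A = ∫ x in D, x 1) :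
    ENNReal.ofReal (1 / 4) ≤
      volume {x ∈ D | 1 / (32 * A) ≤ x 0 ∧ x 0 ≤ L - 1 / (32 * A) ∧
        1 / (4 * L) ≤ x 1 ∧ x 1 ≤ 4 * A} := by
  have hx1m : Measurable fun x : E2 => x 1 := by fun_prop
  have hnn : 0 ≤ᵐ[volume.restrict D] fun x : E2 => x 1 :=
    ae_restrict_of_forall_mem hD fun x hx => (hsub x hx).2.le
  -- A is positive
  have hApos : 0 < A := by
    rw [hA, setIntegral_pos_iff_support_of_nonneg_ae hnn hint]
    refine lt_of_lt_of_le (by rw [hvol]; norm_num) (measure_mono ?_)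
    intro x hx
    exact ⟨(hsub x hx).2.ne', hx⟩
  have h32 : (0:ℝ) < 1 / (32 * A) := by
    apply one_div_pos.mpr; linarith
  -- Markov inequality bound
  have hmark : volume (D ∩ {x : E2 | 4 * A ≤ x 1}) ≤ ENNReal.ofReal (1 / 4) := by
    have h := meas_ge_le_lintegral_div (μ := volume.restrict D)
        (f := fun x => ENNReal.ofReal (x 1))
        (hx1m.ennreal_ofReal.aemeasurable) (ε := ENNReal.ofReal (4 * A))
        (by simp only [ne_eq, ENNReal.ofReal_eq_zero, not_le]; linarith)
        ENNReal.ofReal_ne_top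
    have hle : volume (D ∩ {x : E2 | 4 * A ≤ x 1}) ≤
        volume.restrict D {x : E2 | ENNReal.ofReal (4 * A) ≤ ENNReal.ofReal (x 1)} := by
      rw [Measure.restrict_apply' hD]
      refine measure_mono fun x hx => ⟨ENNReal.ofReal_le_ofReal hx.2, hx.1⟩
    refine hle.trans (h.trans ?_)
    have hlint : (∫⁻ x in D, ENNReal.ofReal (x 1)) = ENNReal.ofReal A := by
      rw [hA, ofReal_integral_eq_lintegral_ofReal hint hnn]
    rw [hlint, ← ENNReal.ofReal_div_of_pos (by linarith)]
    apply le_of_eq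
    congr 1
    field_simp
  -- low strip bound
  have hm3 : volume (D ∩ {x : E2 | x 1 ≤ 1 / (4 * L)}) ≤ ENNReal.ofReal (1 / 4) := by
    have hsub3 : D ∩ {x : E2 | x 1 ≤ 1 / (4 * L)} ⊆
        {x : E2 | (0 ≤ x 0 ∧ x 0 ≤ L) ∧ (0 ≤ x 1 ∧ x 1 ≤ 1 / (4 * L))} := by
      intro x ⟨hx, hx2⟩
      exact ⟨(hsub x hx).1, (hsub x hx).2.le, hx2⟩
    refine (measure_mono hsub3).trans ?_
    rw [volume_box, ← ENNReal.ofReal_mul (by linarith)]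
    apply le_of_eq
    congr 1
    field_simp
    ring
  -- left strip bound
  have hm1 : volume (D ∩ {x : E2 | x 0 ≤ 1 / (32 * A) ∧ x 1 ≤ 4 * A}) ≤
      ENNReal.ofReal (1 / 8) := by
    have hsub1 : D ∩ {x : E2 | x 0 ≤ 1 / (32 * A) ∧ x 1 ≤ 4 * A} ⊆
        {x : E2 | (0 ≤ x 0 ∧ x 0 ≤ 1 / (32 * A)) ∧ (0 ≤ x 1 ∧ x 1 ≤ 4 * A)} := by
      intro x ⟨hx, hx1, hx2⟩
      exact ⟨⟨(hsub x hx).1.1, hx1⟩, (hsub x hx).2.le, hx2⟩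
    refine (measure_mono hsub1).trans ?_
    rw [volume_box, ← ENNReal.ofReal_mul (by linarith)]
    apply le_of_eq
    congr 1
    field_simp
    ring
  -- right strip bound
  have hm2 : volume (D ∩ {x : E2 | L - 1 / (32 * A) ≤ x 0 ∧ x 1 ≤ 4 * A}) ≤
      ENNReal.ofReal (1 / 8) := by
    have hsub2 : D ∩ {x : E2 | L - 1 / (32 * A) ≤ x 0 ∧ x 1 ≤ 4 * A} ⊆
        {x : E2 | (L - 1 / (32 * A) ≤ x 0 ∧ x 0 ≤ L) ∧ (0 ≤ x 1 ∧ x 1 ≤ 4 * A)} := by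
      intro x ⟨hx, hx1, hx2⟩
      exact ⟨⟨hx1, (hsub x hx).1.2⟩, (hsub x hx).2.le, hx2⟩
    refine (measure_mono hsub2).trans ?_
    rw [volume_box, ← ENNReal.ofReal_mul (by linarith)]
    apply le_of_eq
    congr 1
    field_simp
    ring
  set G := {x ∈ D | 1 / (32 * A) ≤ x 0 ∧ x 0 ≤ L - 1 / (32 * A) ∧
      1 / (4 * L) ≤ x 1 ∧ x 1 ≤ 4 * A} with hG
  -- covering
  have hcover : D ⊆ G ∪ ((D ∩ {x : E2 | 4 * A ≤ x 1}) ∪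
      ((D ∩ {x : E2 | x 1 ≤ 1 / (4 * L)}) ∪
        ((D ∩ {x : E2 | x 0 ≤ 1 / (32 * A) ∧ x 1 ≤ 4 * A}) ∪
          (D ∩ {x : E2 | L - 1 / (32 * A) ≤ x 0 ∧ x 1 ≤ 4 * A})))) := by
    intro x hx
    by_cases hg : x ∈ G
    · exact Or.inl hg
    · right
      rw [hG] at hg
      simp only [Set.mem_setOf_eq, not_and, not_le] at hg
      rcases le_total (4 * A) (x 1) with h4 | h4
      · exact Or.inl ⟨hx, h4⟩
      right
      rcases le_total (x 1) (1 / (4 * L)) with h3 | h3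
      · exact Or.inl ⟨hx, h3⟩
      right
      rcases le_total (x 0) (1 / (32 * A)) with h1 | h1
      · exact Or.inl ⟨hx, h1, h4⟩
      · refine Or.inr ⟨hx, ?_, h4⟩
        by_contra hc
        push_neg at hc
        have := hg hx h1 hc.le h3
        linarith
  have hbound : (1 : ENNReal) ≤ volume G + ENNReal.ofReal (3 / 4) := by
    calc (1 : ENNReal) = volume D := hvol.symm
      _ ≤ volume (G ∪ _) := measure_mono hcover
      _ ≤ volume G + (volume (D ∩ {x : E2 | 4 * A ≤ x 1}) +
          (volume (D ∩ {x : E2 | x 1 ≤ 1 / (4 * L)}) +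
            (volume (D ∩ {x : E2 | x 0 ≤ 1 / (32 * A) ∧ x 1 ≤ 4 * A}) +
              volume (D ∩ {x : E2 | L - 1 / (32 * A) ≤ x 0 ∧ x 1 ≤ 4 * A})))) := by
        refine (measure_union_le _ _).trans ?_
        gcongr
        refine (measure_union_le _ _).trans ?_
        gcongr
        refine (measure_union_le _ _).trans ?_
        gcongr
        exact measure_union_le _ _
      _ ≤ volume G + (ENNReal.ofReal (1 / 4) + (ENNReal.ofReal (1 / 4) +
          (ENNReal.ofReal (1 / 8) + ENNReal.ofReal (1 / 8)))) := by gcongr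
      _ = volume G + ENNReal.ofReal (3 / 4) := by
        rw [← ENNReal.ofReal_add (by norm_num) (by norm_num),
          ← ENNReal.ofReal_add (by norm_num) (by norm_num),
          ← ENNReal.ofReal_add (by norm_num) (by norm_num)]
        norm_num
  have hkey : ENNReal.ofReal (1 / 4) = 1 - ENNReal.ofReal (3 / 4) := by
    rw [← ENNReal.ofReal_one, ← ENNReal.ofReal_sub _ (by norm_num)]
    norm_num
  rw [hkey]
  exact tsub_le_iff_right.mpr hbound
end
end

section
/- Let D ⊂ ℝ² be measurable with |D| = 1, D ⊂ {0 ≤ x₁ ≤ L} × (0,∞), A = ∫_D x₂ dx, and let g, h : ℝ → ℝ satisfy: g' = 1 on (1/(32A), L − 1/(32A)) and g' ≥ 0 everywhere; h = 1 on (1/(4L), 4A) and h ≥ 0 everywhere. Then ∫_D g'(x₁) h(x₂) dx ≥ 1/4. -/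
open MeasureTheory Real
open ENNReal
noncomputable section

lemma coord_meas (i : Fin 2) : Measurable fun x : E2 => x i :=
  (measurable_pi_apply i).comp (MeasurableEquiv.toLp 2 (Fin 2 → ℝ)).symm.measurable

lemma box_vol (s t : Set ℝ) (hs : MeasurableSet s) (ht : MeasurableSet t) :
    volume {x : E2 | x 0 ∈ s ∧ x 1 ∈ t} = volume s * volume t := by
  have hmp := EuclideanSpace.volume_preserving_symm_measurableEquiv_toLp (Fin 2)
  have he : {x : E2 | x 0 ∈ s ∧ x 1 ∈ t} =
      (MeasurableEquiv.toLp 2 (Fin 2 → ℝ)).symm ⁻¹' (Set.univ.pi ![s, t]) := by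
    ext x
    simp [Set.mem_pi, Fin.forall_fin_two]
  have hms : MeasurableSet (Set.univ.pi ![s, t]) := by
    apply MeasurableSet.univ_pi
    intro i; fin_cases i <;> simpa
  rw [he, hmp.measure_preimage hms.nullMeasurableSet, volume_pi_pi]
  simp [Fin.prod_univ_two]

/-- lower bound `∫_D g'(x₁)h(x₂) dx ≥ 1/4` for the cutoffs of the
perimeter lemma. -/
theorem stmt12 (D : Set E2) (hD : MeasurableSet D) (hvol : volume D = 1)
    (L A : ℝ) (hL : 0 < L)
    (hsub : ∀ x ∈ D, (0 ≤ x 0 ∧ x 0 ≤ L) ∧ 0 < x 1)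
    (hA : A = ∫ x in D, x 1)
    (hAint : IntegrableOn (fun x : E2 => x 1) D volume)
    (g h : ℝ → ℝ)
    (hg1 : ∀ x ∈ Set.Ioo (1 / (32 * A)) (L - 1 / (32 * A)), deriv g x = 1)
    (hg0 : ∀ x, 0 ≤ deriv g x)
    (hh1 : ∀ x ∈ Set.Ioo (1 / (4 * L)) (4 * A), h x = 1)
    (hh0 : ∀ x, 0 ≤ h x)
    (hint : IntegrableOn (fun x : E2 => deriv g (x 0) * h (x 1)) D volume) :
    (1 : ℝ) / 4 ≤ ∫ x in D, deriv g (x 0) * h (x 1) := by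
  -- A > 0
  have hA2nn : 0 ≤ᵐ[volume.restrict D] fun x : E2 => x 1 :=
    (ae_restrict_iff' hD).2 (ae_of_all _ fun x hx => (hsub x hx).2.le)
  have hApos : 0 < A := by
    rw [hA, setIntegral_pos_iff_support_of_nonneg_ae hA2nn hAint]
    have : D ⊆ Function.support fun x : E2 => x 1 :=
      fun x hx => ne_of_gt (hsub x hx).2
    rw [Set.inter_eq_right.2 this, hvol]
    norm_num
  set a : ℝ := 1 / (32 * A) with ha
  set b : ℝ := 1 / (4 * L) with hb
  set S : Set E2 := D ∩ {x | x 0 ∈ Set.Ioo a (L - a) ∧ x 1 ∈ Set.Ioo b (4 * A)} with hSdef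
  have hSmeas : MeasurableSet S :=
    hD.inter (((coord_meas 0 measurableSet_Ioo).inter (coord_meas 1 measurableSet_Ioo)))
  have hfnn : ∀ x : E2, 0 ≤ deriv g (x 0) * h (x 1) :=
    fun x => mul_nonneg (hg0 _) (hh0 _)
  have hDfin : volume D ≠ ⊤ := by rw [hvol]; exact ENNReal.one_ne_top
  -- step 1: integral ≥ integral on S = |S|
  have hstep1 : ∫ x in S, deriv g (x 0) * h (x 1) ≤ ∫ x in D, deriv g (x 0) * h (x 1) :=
    setIntegral_mono_set hint (ae_of_all _ hfnn)
      (HasSubset.Subset.eventuallyLE Set.inter_subset_left)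
  have hstep2 : ∫ x in S, deriv g (x 0) * h (x 1) = (volume S).toReal := by
    rw [setIntegral_congr_fun hSmeas (g := fun _ => (1 : ℝ))
      (fun x hx => by rw [hg1 _ hx.2.1, hh1 _ hx.2.2, mul_one]), setIntegral_const, smul_eq_mul,
      mul_one, measureReal_def]
  -- bad sets
  set B1 : Set E2 := D ∩ {x | 4 * A ≤ x 1} with hB1
  set B2 : Set E2 := D ∩ {x | x 1 ≤ b} with hB2
  set B3 : Set E2 := D ∩ {x | x 0 ≤ a ∧ x 1 < 4 * A} with hB3
  set B4 : Set E2 := D ∩ {x | L - a ≤ x 0 ∧ x 1 < 4 * A} with hB4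
  -- Markov bound for B1
  have hB1meas : MeasurableSet B1 := hD.inter (coord_meas 1 measurableSet_Ici)
  have hB1fin : volume B1 ≠ ⊤ :=
    (lt_of_le_of_lt (measure_mono Set.inter_subset_left) (lt_top_iff_ne_top.2 hDfin)).ne
  have hB1bound : volume B1 ≤ ENNReal.ofReal (1 / 4) := by
    have h1 : ∫ _ in B1, (4 * A) ≤ ∫ x in B1, x 1 := by
      apply setIntegral_mono_on
      · exact integrableOn_const hB1fin
      · exact hAint.mono_set Set.inter_subset_left
      · exact hB1meas
      · exact fun x hx => hx.2
    have h2 : ∫ x in B1, x 1 ≤ ∫ x in D, x 1 :=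
      setIntegral_mono_set hAint hA2nn
        (HasSubset.Subset.eventuallyLE Set.inter_subset_left)
    rw [setIntegral_const, smul_eq_mul] at h1
    have h3 : (volume B1).toReal * (4 * A) ≤ A := by
      have := h1.trans h2; rwa [← hA] at this
    have h4 : (volume B1).toReal ≤ 1 / 4 := by
      have h4A : (0:ℝ) < 4 * A := by positivity
      rw [← le_div_iff₀ h4A] at h3
      have : A / (4 * A) = 1 / 4 := by
        rw [div_eq_div_iff h4A.ne' (by norm_num : (4:ℝ) ≠ 0)]; ring
      linarith
    exact (ENNReal.le_ofReal_iff_toReal_le hB1fin (by norm_num)).2 h4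
  -- box bounds
  have hB2bound : volume B2 ≤ ENNReal.ofReal (1 / 4) := by
    have hsub2 : B2 ⊆ {x : E2 | x 0 ∈ Set.Icc 0 L ∧ x 1 ∈ Set.Icc 0 b} := by
      rintro x ⟨hxD, hx2⟩
      exact ⟨⟨(hsub x hxD).1.1, (hsub x hxD).1.2⟩, ⟨(hsub x hxD).2.le, hx2⟩⟩
    calc volume B2 ≤ _ := measure_mono hsub2
      _ = volume (Set.Icc (0:ℝ) L) * volume (Set.Icc (0:ℝ) b) :=
          box_vol _ _ measurableSet_Icc measurableSet_Icc
      _ ≤ ENNReal.ofReal (1 / 4) := by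
          rw [Real.volume_Icc, Real.volume_Icc, ← ENNReal.ofReal_mul (by linarith)]
          rw [sub_zero, sub_zero]
          apply ENNReal.ofReal_le_ofReal
          have : L * b = 1 / 4 := by rw [hb]; field_simp
          linarith
  have hB3bound : volume B3 ≤ ENNReal.ofReal (1 / 8) := by
    have hsub3 : B3 ⊆ {x : E2 | x 0 ∈ Set.Icc 0 a ∧ x 1 ∈ Set.Icc 0 (4 * A)} := by
      rintro x ⟨hxD, hx1, hx2⟩
      exact ⟨⟨(hsub x hxD).1.1, hx1⟩, ⟨(hsub x hxD).2.le, hx2.le⟩⟩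
    calc volume B3 ≤ _ := measure_mono hsub3
      _ = volume (Set.Icc (0:ℝ) a) * volume (Set.Icc (0:ℝ) (4 * A)) :=
          box_vol _ _ measurableSet_Icc measurableSet_Icc
      _ ≤ ENNReal.ofReal (1 / 8) := by
          rw [Real.volume_Icc, Real.volume_Icc, sub_zero, sub_zero,
            ← ENNReal.ofReal_mul (by positivity)]
          apply ENNReal.ofReal_le_ofReal
          have : a * (4 * A) = 1 / 8 := by
            rw [ha, div_mul_eq_mul_div, div_eq_div_iff (by positivity) (by norm_num)]; ring
          linarith
  have hB4bound : volume B4 ≤ ENNReal.ofReal (1 / 8) := by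
    have hsub4 : B4 ⊆ {x : E2 | x 0 ∈ Set.Icc (L - a) L ∧ x 1 ∈ Set.Icc 0 (4 * A)} := by
      rintro x ⟨hxD, hx1, hx2⟩
      exact ⟨⟨hx1, (hsub x hxD).1.2⟩, ⟨(hsub x hxD).2.le, hx2.le⟩⟩
    calc volume B4 ≤ _ := measure_mono hsub4
      _ = volume (Set.Icc (L - a) L) * volume (Set.Icc (0:ℝ) (4 * A)) :=
          box_vol _ _ measurableSet_Icc measurableSet_Icc
      _ ≤ ENNReal.ofReal (1 / 8) := by
          rw [Real.volume_Icc, Real.volume_Icc, sub_zero, _root_.sub_sub_cancel,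
            ← ENNReal.ofReal_mul (by positivity)]
          apply ENNReal.ofReal_le_ofReal
          have : a * (4 * A) = 1 / 8 := by
            rw [ha, div_mul_eq_mul_div, div_eq_div_iff (by positivity) (by norm_num)]; ring
          linarith
  -- covering
  have hcover : D ⊆ S ∪ (B1 ∪ (B2 ∪ (B3 ∪ B4))) := by
    intro x hx
    rcases le_or_gt (4 * A) (x 1) with h1 | h1
    · exact Or.inr (Or.inl ⟨hx, h1⟩)
    rcases le_or_gt (x 1) b with h2 | h2
    · exact Or.inr (Or.inr (Or.inl ⟨hx, h2⟩))
    rcases le_or_gt (x 0) a with h3 | h3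
    · exact Or.inr (Or.inr (Or.inr (Or.inl ⟨hx, h3, h1⟩)))
    rcases le_or_gt (L - a) (x 0) with h4 | h4
    · exact Or.inr (Or.inr (Or.inr (Or.inr ⟨hx, h4, h1⟩)))
    exact Or.inl ⟨hx, ⟨h3, h4⟩, ⟨h2, h1⟩⟩
  have hSvol : ENNReal.ofReal (1 / 4) ≤ volume S := by
    have h1 : (1 : ℝ≥0∞) ≤ volume S + ENNReal.ofReal (3 / 4) := by
      calc (1 : ℝ≥0∞) = volume D := hvol.symm
        _ ≤ volume (S ∪ (B1 ∪ (B2 ∪ (B3 ∪ B4)))) := measure_mono hcover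
        _ ≤ volume S + (volume B1 + (volume B2 + (volume B3 + volume B4))) := by
            refine (measure_union_le _ _).trans (add_le_add_right ?_ _)
            refine (measure_union_le _ _).trans (add_le_add_right ?_ _)
            refine (measure_union_le _ _).trans (add_le_add_right ?_ _)
            exact measure_union_le _ _
        _ ≤ volume S + (ENNReal.ofReal (1/4) + (ENNReal.ofReal (1/4) +
              (ENNReal.ofReal (1/8) + ENNReal.ofReal (1/8)))) := by
            gcongr
        _ = volume S + ENNReal.ofReal (3 / 4) := by
            rw [← ENNReal.ofReal_add (by norm_num) (by norm_num),
              ← ENNReal.ofReal_add (by norm_num) (by norm_num),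
              ← ENNReal.ofReal_add (by norm_num) (by norm_num)]
            norm_num
    have h2 : (1 : ℝ≥0∞) - ENNReal.ofReal (3 / 4) ≤ volume S := tsub_le_iff_right.2 h1
    calc ENNReal.ofReal (1 / 4) = 1 - ENNReal.ofReal (3 / 4) := by
          rw [← ENNReal.ofReal_one, ← ENNReal.ofReal_sub _ (by norm_num)]
          norm_num
      _ ≤ volume S := h2
  have hSfin : volume S ≠ ⊤ :=
    (lt_of_le_of_lt (measure_mono Set.inter_subset_left) (lt_top_iff_ne_top.2 hDfin)).ne
  have : (1 : ℝ) / 4 ≤ (volume S).toReal := by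
    have := ENNReal.toReal_mono hSfin hSvol
    rwa [ENNReal.toReal_ofReal (by norm_num)] at this
  linarith [hstep1, hstep2.symm.le.trans hstep1]
end
end
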